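/- (Theorem 3.5, finite time stabilization by impulse controls) Assume: (a) there exist C3 > 0 and σ ∈ (0,1) such that for all ε > 0, all t > 0 and all u0 ∈ L²(Ω), ‖S(t)u0‖² ≤ e^{C3(1 + (1/t)^{σ/(1−σ)})} e^{((C3/t) ln(e + 1/ε))^σ} ‖S(t)u0‖_ω² + ε ‖u0‖²; and (b) there exist c > 0 and ρ > 0 such that Card{ j ≥ 1 : λ_j ≤ Λ } ≤ c Λ^{1/ρ} for every Λ > 0. Then for every T > 0 there exist a strictly increasing sequence (t_m)_{m≥0} with t_0 = 0 and t_m → T, bounded linear operators F_m : L²(Ω) → L²(Ω), and constants C, K > 0, such that for every z0 ∈ L²(Ω) the impulse-feedback trajectory z : [0,T) → L²(Ω), defined by z(0) = z0 and, writing s_m := (t_m + t_{m+1})/2, by z(t) = S(t − t_m) z(t_m) for t ∈ [t_m, s_m) and z(t) = S(t − s_m)( S(s_m − t_m) z(t_m) + 1_ω F_m(z(t_m)) ) for t ∈ [s_m, t_{m+1}), satisfies ‖z(t)‖ ≤ C e^{ −(1/K) (T/(T−t))^{σ/(1−σ)} } ‖z0‖ for all t ∈ [0,T). In particular ‖z(t)‖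 → 0 as t → T⁻, and ‖F_m(z(t_m))‖ → 0 as m → ∞. -/

import Mathlib

open MeasureTheory Set Filter
open scoped RealInnerProductSpace ENNReal

noncomputable section
set_option maxHeartbeats 2000000
set_option synthInstance.maxHeartbeats 400000


noncomputable def heatSG {d : ℕ} {Ω : Set (EuclideanSpace ℝ (Fin d))}
    (B : HilbertBasis ℕ ℝ (Lp ℝ 2 (volume.restrict Ω))) (lam : ℕ → ℝ)
    (t : ℝ) (u : Lp ℝ 2 (volume.restrict Ω)) : Lp ℝ 2 (volume.restrict Ω) :=
  ∑' j, (Real.exp (-(lam j) * t) * ⟪u, B j⟫) • B j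

section Heat
variable {d : ℕ} {Ω : Set (EuclideanSpace ℝ (Fin d))}
variable (B : HilbertBasis ℕ ℝ (Lp ℝ 2 (volume.restrict Ω))) {lam : ℕ → ℝ}
variable (hpos : ∀ j, 0 < lam j)

lemma inner_sq_summable (u : Lp ℝ 2 (volume.restrict Ω)) :
    Summable (fun j => ⟪u, B j⟫ * ⟪u, B j⟫) := by
  have h := (B.hasSum_inner_mul_inner u u).summable
  refine h.congr (fun j => ?_)
  rw [real_inner_comm]

include hpos in
lemma exp_coeff_le (t : ℝ) (ht : 0 ≤ t) (j : ℕ) : |Real.exp (-(lam j) * t)| ≤ 1 := by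
  rw [abs_of_pos (Real.exp_pos _)]
  apply Real.exp_le_one_iff.mpr
  have h0 : 0 ≤ lam j * t := mul_nonneg (hpos j).le ht
  linarith

include hpos in
lemma coeff_memlp (t : ℝ) (ht : 0 ≤ t) (u : Lp ℝ 2 (volume.restrict Ω)) :
    Memℓp (fun j => Real.exp (-(lam j) * t) * ⟪u, B j⟫) 2 := by
  apply memℓp_gen
  have h2 : ((2 : ℝ≥0∞).toReal) = (2:ℝ) := by simp
  rw [h2]
  apply Summable.of_nonneg_of_le (fun j => by positivity) _ (inner_sq_summable B u)
  intro j
  have hb := exp_coeff_le hpos t ht j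
  have he : ‖Real.exp (-(lam j) * t) * ⟪u, B j⟫‖ ^ (2:ℝ) =
      (Real.exp (-(lam j) * t))^2 * (⟪u, B j⟫ * ⟪u, B j⟫) := by
    rw [Real.rpow_two, norm_mul]
    have habs : ∀ x : ℝ, ‖x‖ = |x| := fun x => rfl
    rw [habs, habs, mul_pow, sq_abs, sq_abs]
    ring
  rw [he]
  have he2 : Real.exp (-(lam j) * t) ^ 2 ≤ 1 := by
    rw [← sq_abs]; nlinarith [abs_nonneg (Real.exp (-(lam j) * t))]
  nlinarith [mul_self_nonneg ⟪u, B j⟫, he2]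

include hpos in
lemma heat_eq_symm (t : ℝ) (ht : 0 ≤ t) (u : Lp ℝ 2 (volume.restrict Ω)) :
    heatSG B lam t u = B.repr.symm ⟨_, coeff_memlp B hpos t ht u⟩ := by
  rw [heatSG]
  have h := B.hasSum_repr (B.repr.symm ⟨_, coeff_memlp B hpos t ht u⟩)
  rw [LinearIsometryEquiv.apply_symm_apply] at h
  exact h.tsum_eq

include hpos in
lemma heat_hasSum (t : ℝ) (ht : 0 ≤ t) (u : Lp ℝ 2 (volume.restrict Ω)) :
    HasSum (fun j => (Real.exp (-(lam j) * t) * ⟪u, B j⟫) • B j) (heatSG B lam t u) := by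
  rw [heat_eq_symm B hpos t ht u]
  have h := B.hasSum_repr (B.repr.symm ⟨_, coeff_memlp B hpos t ht u⟩)
  rw [LinearIsometryEquiv.apply_symm_apply] at h
  exact h

include hpos in
lemma heat_repr (t : ℝ) (ht : 0 ≤ t) (u : Lp ℝ 2 (volume.restrict Ω)) (j : ℕ) :
    B.repr (heatSG B lam t u) j = Real.exp (-(lam j) * t) * ⟪u, B j⟫ := by
  rw [heat_eq_symm B hpos t ht u, LinearIsometryEquiv.apply_symm_apply]

include hpos in
lemma heat_inner_basis (t : ℝ) (ht : 0 ≤ t) (u : Lp ℝ 2 (volume.restrict Ω)) (j : ℕ) :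
    ⟪heatSG B lam t u, B j⟫ = Real.exp (-(lam j) * t) * ⟪u, B j⟫ := by
  rw [real_inner_comm]
  exact (B.repr_apply_apply _ j).symm.trans (heat_repr B hpos t ht u j)

include hpos in
lemma heat_inner_hasSum (t : ℝ) (ht : 0 ≤ t) (u v : Lp ℝ 2 (volume.restrict Ω)) :
    HasSum (fun j => (Real.exp (-(lam j) * t) * ⟪u, B j⟫) * ⟪v, B j⟫)
      ⟪v, heatSG B lam t u⟫ := by
  have h := (heat_hasSum B hpos t ht u).mapL (innerSL ℝ v)
  convert h using 2 with j
  · rfl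
  · simp [inner_smul_right]
  · simp

include hpos in
lemma heat_selfadj (t : ℝ) (ht : 0 ≤ t) (u v : Lp ℝ 2 (volume.restrict Ω)) :
    ⟪heatSG B lam t u, v⟫ = ⟪u, heatSG B lam t v⟫ := by
  rw [real_inner_comm]
  have h1 := (heat_inner_hasSum B hpos t ht u v).tsum_eq
  have h2 := (heat_inner_hasSum B hpos t ht v u).tsum_eq
  rw [← h1, ← h2]
  apply tsum_congr; intro j; ring

include hpos in
lemma heat_norm_le (t : ℝ) (ht : 0 ≤ t) (u : Lp ℝ 2 (volume.restrict Ω)) :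
    ‖heatSG B lam t u‖ ≤ ‖u‖ := by
  have hn : ‖heatSG B lam t u‖^2 ≤ ‖u‖^2 := by
    rw [← real_inner_self_eq_norm_sq, ← real_inner_self_eq_norm_sq]
    have h1 := heat_inner_hasSum B hpos t ht u (heatSG B lam t u)
    have h2 := B.hasSum_inner_mul_inner u u
    have e1 : ∀ j, (Real.exp (-(lam j) * t) * ⟪u, B j⟫) * ⟪heatSG B lam t u, B j⟫
        = (Real.exp (-(lam j) * t))^2 * (⟪u, B j⟫ * ⟪u, B j⟫) := by
      intro j
      rw [heat_inner_basis B hpos t ht u j]; ring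
    have h1' : HasSum (fun j => (Real.exp (-(lam j) * t))^2 * (⟪u, B j⟫ * ⟪u, B j⟫))
        ⟪heatSG B lam t u, heatSG B lam t u⟫ := (funext e1) ▸ h1
    rw [← h1'.tsum_eq, ← h2.tsum_eq]
    apply Summable.tsum_le_tsum _ h1'.summable h2.summable
    intro j
    have hb := exp_coeff_le hpos t ht j
    have hc : ⟪u, B j⟫ * ⟪B j, u⟫ = ⟪u, B j⟫ * ⟪u, B j⟫ := by rw [real_inner_comm u (B j)]
    rw [hc]
    have he2 : Real.exp (-(lam j) * t) ^ 2 ≤ 1 := by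
      rw [← sq_abs]; nlinarith [abs_nonneg (Real.exp (-(lam j) * t))]
    nlinarith [mul_self_nonneg ⟪u, B j⟫, he2]
  nlinarith [norm_nonneg (heatSG B lam t u), norm_nonneg u]

include hpos in
lemma heat_add (t : ℝ) (ht : 0 ≤ t) (u v : Lp ℝ 2 (volume.restrict Ω)) :
    heatSG B lam t (u + v) = heatSG B lam t u + heatSG B lam t v := by
  have h := (heat_hasSum B hpos t ht u).add (heat_hasSum B hpos t ht v)
  have h2 := heat_hasSum B hpos t ht (u + v)
  have e : ∀ j, (Real.exp (-(lam j) * t) * ⟪u + v, B j⟫) • B j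
      = (Real.exp (-(lam j) * t) * ⟪u, B j⟫) • B j
        + (Real.exp (-(lam j) * t) * ⟪v, B j⟫) • B j := by
    intro j; rw [inner_add_left]; module
  exact h2.unique ((funext e) ▸ h)

include hpos in
lemma heat_smul (t : ℝ) (ht : 0 ≤ t) (r : ℝ) (u : Lp ℝ 2 (volume.restrict Ω)) :
    heatSG B lam t (r • u) = r • heatSG B lam t u := by
  have h := (heat_hasSum B hpos t ht u).const_smul r
  have h2 := heat_hasSum B hpos t ht (r • u)
  have e : ∀ j, (Real.exp (-(lam j) * t) * ⟪r • u, B j⟫) • B j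
      = r • ((Real.exp (-(lam j) * t) * ⟪u, B j⟫) • B j) := by
    intro j; rw [real_inner_smul_left, smul_smul]; congr 1; ring
  exact h2.unique ((funext e) ▸ h)

end Heat




noncomputable def indLp {d : ℕ} {Ω : Set (EuclideanSpace ℝ (Fin d))}
    (ω : Set (EuclideanSpace ℝ (Fin d))) (hω : MeasurableSet ω)
    (f : Lp ℝ 2 (volume.restrict Ω)) : Lp ℝ 2 (volume.restrict Ω) :=
  MemLp.toLp (ω.indicator ⇑f) ((Lp.memLp f).indicator hω)

section Ind
variable {d : ℕ} {Ω : Set (EuclideanSpace ℝ (Fin d))}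
variable (ω : Set (EuclideanSpace ℝ (Fin d))) (hωm : MeasurableSet ω)

lemma indLp_coe (f : Lp ℝ 2 (volume.restrict Ω)) :
    (indLp ω hωm f : _ → ℝ) =ᵐ[volume.restrict Ω] ω.indicator ⇑f :=
  MemLp.coeFn_toLp _

lemma indLp_add (f g : Lp ℝ 2 (volume.restrict Ω)) :
    indLp ω hωm (f + g) = indLp ω hωm f + indLp ω hωm g := by
  rw [indLp, indLp, indLp, ← MemLp.toLp_add]
  apply MemLp.toLp_congr
  have h := (Lp.coeFn_add f g).indicator (s := ω)
  refine h.trans (Eventually.of_forall ?_)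
  intro a
  by_cases hmem : a ∈ ω <;> simp [Set.indicator_apply, hmem]

lemma indLp_smul (r : ℝ) (f : Lp ℝ 2 (volume.restrict Ω)) :
    indLp ω hωm (r • f) = r • indLp ω hωm f := by
  rw [indLp, indLp, ← MemLp.toLp_const_smul]
  apply MemLp.toLp_congr
  have h := (Lp.coeFn_smul r f).indicator (s := ω)
  refine h.trans (Eventually.of_forall ?_)
  intro a
  by_cases hmem : a ∈ ω <;> simp [Set.indicator_apply, hmem]

lemma indLp_norm_le (f : Lp ℝ 2 (volume.restrict Ω)) : ‖indLp ω hωm f‖ ≤ ‖f‖ := by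
  rw [indLp, Lp.norm_toLp, Lp.norm_def]
  apply ENNReal.toReal_mono (Lp.eLpNorm_ne_top f)
  exact eLpNorm_indicator_le _

lemma indLp_selfadj (f g : Lp ℝ 2 (volume.restrict Ω)) :
    ⟪indLp ω hωm f, g⟫ = ⟪f, indLp ω hωm g⟫ := by
  rw [L2.inner_def, L2.inner_def]
  apply integral_congr_ae
  filter_upwards [indLp_coe ω hωm f, indLp_coe ω hωm g] with a ha hb
  rw [ha, hb, RCLike.inner_apply, RCLike.inner_apply]
  by_cases hmem : a ∈ ω <;>
    simp [Set.indicator_of_mem, Set.indicator_of_notMem, hmem]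

end Ind



section Control
variable {H : Type*} [NormedAddCommGroup H] [InnerProductSpace ℝ H] [CompleteSpace H]

lemma exists_control (D Q : H →L[ℝ] H)
    (hD : ∀ x y, ⟪D x, y⟫ = ⟪x, D y⟫) (hQ : ∀ x y, ⟪Q x, y⟫ = ⟪x, Q y⟫)
    (hDc : ∀ x, ‖D x‖ ≤ ‖x‖)
    (M ε : ℝ) (hM : 0 < M) (hε : 0 < ε)
    (hobs : ∀ u, ‖D u‖^2 ≤ M * ‖Q (D u)‖^2 + ε * ‖u‖^2) :
    ∃ F : H →L[ℝ] H, ∀ z : H,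
      ‖F z‖^2 ≤ M * ‖z‖^2 ∧ ‖D (D z) + D (Q (F z))‖^2 ≤ ε * ‖z‖^2 := by
  classical
  -- the operator P = (1/M) I + (1/ε) (QD)(DQ)
  set Bop : H →L[ℝ] H := D.comp Q with hBop
  set Bst : H →L[ℝ] H := Q.comp D with hBst
  set P : H →L[ℝ] H := (1/M) • ContinuousLinearMap.id ℝ H + (1/ε) • (Bst.comp Bop) with hP
  have hPapp : ∀ f, P f = (1/M) • f + (1/ε) • Q (D (D (Q f))) := by
    intro f; simp [hP, hBst, hBop]
  have hPinner : ∀ f g, ⟪P f, g⟫ = (1/M) * ⟪f, g⟫ + (1/ε) * ⟪D (Q f), D (Q g)⟫ := by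
    intro f g
    rw [hPapp]
    rw [inner_add_left, real_inner_smul_left, real_inner_smul_left]
    rw [hQ, hD]
  have hcoer : IsCoercive ((innerSL ℝ).comp P) := by
    refine ⟨1/M, by positivity, ?_⟩
    intro u
    have h := hPinner u u
    have h2 : ⟪D (Q u), D (Q u)⟫ ≥ 0 := real_inner_self_nonneg
    have h3 : ((innerSL ℝ).comp P) u u = ⟪P u, u⟫ := rfl
    rw [h3, h]
    have : ⟪u, u⟫ = ‖u‖ * ‖u‖ := real_inner_self_eq_norm_mul_norm u
    rw [this]
    have h4 := mul_nonneg (one_div_pos.mpr hε).le h2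
    nlinarith
  set E := hcoer.continuousLinearEquivOfBilin with hE
  have hEP : ∀ v, E v = P v := by
    intro v
    apply ext_inner_right ℝ
    intro w
    exact hcoer.continuousLinearEquivOfBilin_apply v w
  refine ⟨(-(1/ε)) • ((E.symm : H →L[ℝ] H).comp ((Q.comp D).comp (D.comp D))), ?_⟩
  intro z
  set f : H := ((-(1/ε)) • ((E.symm : H →L[ℝ] H).comp ((Q.comp D).comp (D.comp D)))) z with hf
  set r : H := D (D z) + D (Q f) with hr
  -- the optimality identity
  have hopt : (1/M) • f + (1/ε) • Q (D (D (Q f))) = (-(1/ε)) • Q (D (D (D z))) := by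
    have h1 : f = (-(1/ε)) • (E.symm (Q (D (D (D z))))) := by
      rw [hf]; simp
    have h2 : P f = (-(1/ε)) • Q (D (D (D z))) := by
      rw [← hEP f, h1, _root_.map_smul, E.apply_symm_apply]
    rw [hPapp] at h2
    exact h2
  have hstar : (1/M) • f = (-(1/ε)) • Q (D r) := by
    have hDr : Q (D r) = Q (D (D (D z))) + Q (D (D (Q f))) := by
      rw [hr, map_add, map_add]
    rw [hDr, smul_add]
    have h2 := eq_sub_of_add_eq hopt
    rw [h2]
    module
  set V : ℝ := (1/M) * ‖f‖^2 + (1/ε) * ‖r‖^2 with hV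
  have hVnn : 0 ≤ V := by positivity
  have step1 : (1/M) * ‖f‖^2 = -(1/ε) * ⟪r, D (Q f)⟫ := by
    have : (1/M) * ‖f‖^2 = ⟪(1/M) • f, f⟫ := by
      rw [real_inner_smul_left, real_inner_self_eq_norm_sq]
    rw [this, hstar, real_inner_smul_left]
    congr 1
    rw [hQ, hD, real_inner_comm]
  have step2 : V = (1/ε) * ⟪D (D r), z⟫ := by
    have hsub : ⟪r, r⟫ - ⟪r, D (Q f)⟫ = ⟪r, D (D z)⟫ := by
      rw [← inner_sub_right]
      congr 1
      rw [hr]; abel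
    have hDD : ⟪r, D (D z)⟫ = ⟪D (D r), z⟫ := ((hD (D r) z).trans (hD r (D z))).symm
    rw [hDD] at hsub
    have hrr : ⟪r, r⟫ = ‖r‖^2 := real_inner_self_eq_norm_sq r
    rw [hV, step1]
    linear_combination (1/ε) * hsub - (1/ε) * hrr
  have hQDr : Q (D r) = (-(ε/M)) • f := by
    have h := hstar
    have hM' : (M:ℝ) ≠ 0 := ne_of_gt hM
    have hε' : (ε:ℝ) ≠ 0 := ne_of_gt hε
    have := congrArg (fun x => (-ε : ℝ) • x) h
    simp only [smul_smul] at this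
    rw [show -ε * (1/M) = -(ε/M) by field_simp] at this
    rw [show -ε * -(1/ε) = 1 by field_simp] at this
    rw [one_smul] at this
    exact this.symm
  have step4 : ‖D (D r)‖^2 ≤ ε^2 * V := by
    have h1 : ‖D (D r)‖ ≤ ‖D r‖ := hDc _
    have h2 := hobs r
    have h3 : ‖Q (D r)‖^2 = (ε/M)^2 * ‖f‖^2 := by
      rw [hQDr, norm_smul, Real.norm_eq_abs, abs_neg, abs_of_pos (div_pos hε hM), mul_pow]
    have h4 : ‖D (D r)‖^2 ≤ ‖D r‖^2 := by nlinarith [norm_nonneg (D (D r)), norm_nonneg (D r)]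
    have hM' : (M:ℝ) ≠ 0 := ne_of_gt hM
    calc ‖D (D r)‖^2 ≤ M * ‖Q (D r)‖^2 + ε * ‖r‖^2 := le_trans h4 h2
      _ = ε^2 * V := by rw [h3, hV]; field_simp
  have step5 : V ≤ ‖z‖^2 := by
    rcases eq_or_lt_of_le hVnn with hV0 | hVpos
    · rw [← hV0]; positivity
    · have h5 : V ≤ (1/ε) * (‖D (D r)‖ * ‖z‖) := by
        rw [step2]
        have := real_inner_le_norm (D (D r)) z
        have h6 : (0:ℝ) < 1/ε := by positivity
        nlinarith
      have h7 : V^2 ≤ ((1/ε) * (‖D (D r)‖ * ‖z‖))^2 := by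
        have := mul_self_le_mul_self hVnn h5
        calc V^2 = V * V := sq V
          _ ≤ ((1/ε) * (‖D (D r)‖ * ‖z‖)) * ((1/ε) * (‖D (D r)‖ * ‖z‖)) := this
          _ = ((1/ε) * (‖D (D r)‖ * ‖z‖))^2 := (sq _).symm
      have h8 : V^2 ≤ V * ‖z‖^2 := by
        have hz2 : (0:ℝ) ≤ ‖z‖^2 := sq_nonneg _
        have h9 := mul_le_mul_of_nonneg_right step4 hz2
        have hε2 : (0:ℝ) < (1/ε)^2 := by positivity
        calc V^2 ≤ ((1/ε) * (‖D (D r)‖ * ‖z‖))^2 := h7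
          _ = (1/ε)^2 * (‖D (D r)‖^2 * ‖z‖^2) := by ring
          _ ≤ (1/ε)^2 * (ε^2 * V * ‖z‖^2) := mul_le_mul_of_nonneg_left h9 hε2.le
          _ = V * ‖z‖^2 := by field_simp
      nlinarith [h8, hVpos, mul_pos hVpos hVpos]
  constructor
  · have h10 : (1/M) * ‖f‖^2 ≤ V := by
      have : 0 ≤ (1/ε) * ‖r‖^2 := by positivity
      rw [hV]; linarith
    have h11 : (1/M) * ‖f‖^2 ≤ ‖z‖^2 := le_trans h10 step5
    calc ‖f‖^2 = M * ((1/M) * ‖f‖^2) := by field_simp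
      _ ≤ M * ‖z‖^2 := mul_le_mul_of_nonneg_left h11 hM.le
  · have h10 : (1/ε) * ‖r‖^2 ≤ V := by
      have : 0 ≤ (1/M) * ‖f‖^2 := by positivity
      rw [hV]; linarith
    have h11 : (1/ε) * ‖r‖^2 ≤ ‖z‖^2 := le_trans h10 step5
    calc ‖D (D z) + D (Q f)‖^2 = ‖r‖^2 := by rw [hr]
      _ = ε * ((1/ε) * ‖r‖^2) := by field_simp
      _ ≤ ε * ‖z‖^2 := mul_le_mul_of_nonneg_left h11 hε.le

end Control


section CLMdefs
variable {d : ℕ} {Ω : Set (EuclideanSpace ℝ (Fin d))}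
variable (B : HilbertBasis ℕ ℝ (Lp ℝ 2 (volume.restrict Ω))) {lam : ℕ → ℝ}

noncomputable def heatCLM (hpos : ∀ j, 0 < lam j) (t : ℝ) (ht : 0 ≤ t) :
    Lp ℝ 2 (volume.restrict Ω) →L[ℝ] Lp ℝ 2 (volume.restrict Ω) :=
  LinearMap.mkContinuous
    { toFun := heatSG B lam t
      map_add' := heat_add B hpos t ht
      map_smul' := heat_smul B hpos t ht }
    1 (fun u => by simpa using heat_norm_le B hpos t ht u)

lemma heatCLM_coe (hpos : ∀ j, 0 < lam j) (t : ℝ) (ht : 0 ≤ t) :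
    ⇑(heatCLM B hpos t ht) = heatSG B lam t := rfl

noncomputable def indCLM (ω : Set (EuclideanSpace ℝ (Fin d))) (hωm : MeasurableSet ω) :
    Lp ℝ 2 (volume.restrict Ω) →L[ℝ] Lp ℝ 2 (volume.restrict Ω) :=
  LinearMap.mkContinuous
    { toFun := indLp ω hωm
      map_add' := indLp_add ω hωm
      map_smul' := indLp_smul ω hωm }
    1 (fun u => by simpa using indLp_norm_le ω hωm u)

lemma indCLM_coe (ω : Set (EuclideanSpace ℝ (Fin d))) (hωm : MeasurableSet ω) :
    ⇑(indCLM (Ω := Ω) ω hωm) = indLp ω hωm := rfl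

end CLMdefs

lemma exists_A (σ c4 c5 c6 bb : ℝ) (hσ0 : 0 < σ) (hσ1 : σ < 1) (hc4 : 0 < c4) (hbb : 0 < bb) :
    ∃ A : ℝ, 1 ≤ A ∧ c5 + (c4 * (A + 2)) ^ σ + c6 ≤ A / bb := by
  have h1 : Tendsto (fun A : ℝ => A ^ σ * (A ^ (1-σ) / bb - 2 * c4 ^ σ)) atTop atTop := by
    apply Filter.Tendsto.atTop_mul_atTop₀ (tendsto_rpow_atTop hσ0)
    apply Filter.tendsto_atTop_add_const_right
    exact (tendsto_rpow_atTop (by linarith)).atTop_div_const hbb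
  have h2 : ∀ᶠ A : ℝ in atTop, A ^ σ * (A ^ (1-σ) / bb - 2 * c4 ^ σ) = A / bb - 2 * c4 ^ σ * A ^ σ := by
    filter_upwards [eventually_gt_atTop (0:ℝ)] with A hA
    have : A ^ σ * A ^ (1-σ) = A := by
      rw [← Real.rpow_add hA]; norm_num
    field_simp
    ring_nf
    nlinarith [this]
  have h3 : Tendsto (fun A : ℝ => A / bb - 2 * c4 ^ σ * A ^ σ) atTop atTop := h1.congr' h2
  have h4 : ∀ᶠ A : ℝ in atTop, c5 + (c4 * (A + 2)) ^ σ + c6 ≤ A / bb := by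
    have h5 := h3.eventually_ge_atTop (c5 + c6)
    filter_upwards [h5, eventually_ge_atTop (2:ℝ)] with A hA5 hA2
    have hApos : (0:ℝ) < A := by linarith
    have hb1 : (c4 * (A + 2)) ^ σ ≤ c4 ^ σ * (2*A) ^ σ := by
      rw [← Real.mul_rpow hc4.le (by linarith)]
      apply Real.rpow_le_rpow (by positivity) (by nlinarith) hσ0.le
    have hb2 : c4 ^ σ * (2*A) ^ σ ≤ 2 * c4 ^ σ * A ^ σ := by
      rw [Real.mul_rpow (by norm_num) hApos.le]
      have h2σ : (2:ℝ) ^ σ ≤ 2 := by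
        calc (2:ℝ) ^ σ ≤ (2:ℝ) ^ (1:ℝ) := by
              apply Real.rpow_le_rpow_of_exponent_le one_le_two hσ1.le
          _ = 2 := Real.rpow_one 2
      have hAσ : (0:ℝ) ≤ A ^ σ := Real.rpow_nonneg hApos.le σ
      calc c4 ^ σ * ((2:ℝ) ^ σ * A ^ σ) ≤ c4 ^ σ * (2 * A ^ σ) :=
            mul_le_mul_of_nonneg_left (mul_le_mul_of_nonneg_right h2σ hAσ)
              (Real.rpow_nonneg hc4.le σ)
        _ = 2 * c4 ^ σ * A ^ σ := by ring
    linarith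
  obtain ⟨A, hA1, hA2⟩ := (h4.and (eventually_ge_atTop (1:ℝ))).exists
  exact ⟨A, hA2, hA1⟩


lemma sq_le_sq_of_nonneg {a b : ℝ} (ha : 0 ≤ a) (hb : 0 ≤ b) (h : a^2 ≤ b^2) : a ≤ b := by
  nlinarith

lemma rpow_natpow (x : ℝ) (hx : 0 ≤ x) (y : ℝ) (m : ℕ) :
    ((x ^ m : ℝ)) ^ y = (x ^ y) ^ m := by
  rw [← Real.rpow_natCast x m, ← Real.rpow_mul hx, ← Real.rpow_natCast (x ^ y) m,
    ← Real.rpow_mul hx, mul_comm]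
/-- Theorem 3.5, finite time stabilization by impulse controls. -/
theorem finite_time_stabilization
    (d : ℕ) (hd : 1 ≤ d) (Ω ω : Set (EuclideanSpace ℝ (Fin d)))
    (hΩo : IsOpen Ω) (hΩb : Bornology.IsBounded Ω) (hΩc : IsConnected Ω)
    (hωo : IsOpen ω) (hωne : ω.Nonempty) (hωΩ : ω ⊆ Ω) (hωm : MeasurableSet ω)
    (B : HilbertBasis ℕ ℝ (Lp ℝ 2 (volume.restrict Ω)))
    (lam : ℕ → ℝ) (hpos : ∀ j, 0 < lam j) (hmono : Monotone lam)
    (hlim : Tendsto lam atTop atTop)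
    (hfin : ∀ Λ : ℝ, {j : ℕ | lam j ≤ Λ}.Finite)
    (σ C3 : ℝ) (hσ : σ ∈ Ioo (0:ℝ) 1) (hC3 : 0 < C3)
    -- (a) the observation estimate (iii)
    (hiii : ∀ ε > 0, ∀ t > 0, ∀ u0 : Lp ℝ 2 (volume.restrict Ω),
      ‖heatSG B lam t u0‖ ^ 2 ≤
        Real.exp (C3 * (1 + (1 / t) ^ (σ / (1 - σ)))) *
          Real.exp ((C3 / t * Real.log (Real.exp 1 + 1 / ε)) ^ σ) *
            ‖indLp ω hωm (heatSG B lam t u0)‖ ^ 2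
        + ε * ‖u0‖ ^ 2)
    -- (b) the counting estimate for the eigenvalues
    (c ρ : ℝ) (hc : 0 < c) (hρ : 0 < ρ)
    (hcount : ∀ Λ > 0, ((hfin Λ).toFinset.card : ℝ) ≤ c * Λ ^ (1 / ρ)) :
    ∀ T > 0,
      ∃ (t_ : ℕ → ℝ) (F : ℕ → Lp ℝ 2 (volume.restrict Ω) →L[ℝ] Lp ℝ 2 (volume.restrict Ω))
        (C K : ℝ), 0 < C ∧ 0 < K ∧
        StrictMono t_ ∧ t_ 0 = 0 ∧ Tendsto t_ atTop (nhds T) ∧ (∀ m, t_ m < T) ∧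
        ∀ z0 : Lp ℝ 2 (volume.restrict Ω), ∀ z : ℝ → Lp ℝ 2 (volume.restrict Ω),
          z 0 = z0 →
          -- free evolution on [t_m, s_m), with s_m = (t_m + t_{m+1})/2
          (∀ m : ℕ, ∀ t ∈ Ico (t_ m) ((t_ m + t_ (m+1)) / 2),
            z t = heatSG B lam (t - t_ m) (z (t_ m))) →
          -- impulse at s_m, then free evolution on [s_m, t_{m+1})
          (∀ m : ℕ, ∀ t ∈ Ico ((t_ m + t_ (m+1)) / 2) (t_ (m+1)),
            z t = heatSG B lam (t - (t_ m + t_ (m+1)) / 2)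
              (heatSG B lam ((t_ m + t_ (m+1)) / 2 - t_ m) (z (t_ m))
                + indLp ω hωm (F m (z (t_ m))))) →
          -- left-continuity at t_{m+1}
          (∀ m : ℕ,
            z (t_ (m+1)) = heatSG B lam (t_ (m+1) - (t_ m + t_ (m+1)) / 2)
              (heatSG B lam ((t_ m + t_ (m+1)) / 2 - t_ m) (z (t_ m))
                + indLp ω hωm (F m (z (t_ m))))) →
          (∀ t ∈ Ico (0:ℝ) T,
            ‖z t‖ ≤ C * Real.exp (-(1 / K) * (T / (T - t)) ^ (σ / (1 - σ))) * ‖z0‖) ∧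
          Tendsto (fun t => ‖z t‖) (nhdsWithin T (Iio T)) (nhds 0) ∧
          Tendsto (fun m => ‖F m (z (t_ m))‖) atTop (nhds 0) := by
  classical
  intro T hT
  obtain ⟨hσ0, hσ1⟩ := hσ
  have h1σ : 0 < 1 - σ := by linarith
  set γ := σ / (1 - σ) with hγdef
  have hγ : 0 < γ := div_pos hσ0 h1σ
  have hγσ : γ * (1 - σ) = σ := by rw [hγdef]; field_simp
  set β := (2:ℝ) ^ (γ + 1) with hβdef
  have hβpos : (0:ℝ) < β := Real.rpow_pos_of_pos two_pos _
  have h2γβ : (2:ℝ)^γ ≤ β := Real.rpow_le_rpow_of_exponent_le one_le_two (by linarith)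
  have hβ2 : (2:ℝ) ≤ β := by
    calc (2:ℝ) = (2:ℝ)^(1:ℝ) := (Real.rpow_one 2).symm
      _ ≤ β := Real.rpow_le_rpow_of_exponent_le one_le_two (by linarith)
  have hβ1 : (1:ℝ) < β := lt_of_lt_of_le one_lt_two hβ2
  obtain ⟨A, hA1, hA⟩ := exists_A σ (4*C3/T) (C3 * (4/T)^γ) ((2:ℝ)^(γ+2)) (β - 1)
    hσ0 hσ1 (by positivity) (by linarith)
  have hA0 : (0:ℝ) < A := by linarith
  set C : ℝ := 2 * Real.exp (A / (2*(β-1)) + C3/2) with hCdef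
  have hC : 0 < C := by positivity
  set t_ : ℕ → ℝ := fun m => T - T * (1/2:ℝ)^m with ht_def
  set τ : ℕ → ℝ := fun m => T * (1/2:ℝ)^(m+2) with hτdef
  have hτpos : ∀ m, 0 < τ m := fun m => by
    simp only [hτdef]; positivity
  set eps : ℕ → ℝ := fun m => Real.exp (-(A * β^m)) with hepsdef
  have hepspos : ∀ m, 0 < eps m := fun m => Real.exp_pos _
  set L : ℕ → ℝ := fun m =>
    C3 * (1 + (1/τ m)^γ) + (C3/τ m * Real.log (Real.exp 1 + 1/eps m))^σ with hLdef
  set SM : ℕ → ℝ := fun m => Real.exp (L m / 2) with hSMdef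
  set Ex : ℕ → ℝ := fun m => Real.exp (-(A/2) * ∑ k ∈ Finset.range m, β^k) with hExdef
  have hβmpos : ∀ m : ℕ, (0:ℝ) < β^m := fun m => pow_pos hβpos m
  have hβm1 : ∀ m : ℕ, (1:ℝ) ≤ β^m := fun m => one_le_pow₀ hβ1.le
  have hSMpos : ∀ m, 0 < SM m := fun m => Real.exp_pos _
  have hExpos : ∀ m, 0 < Ex m := fun m => Real.exp_pos _
  have hτγ : ∀ m, (0:ℝ) ≤ (1/τ m)^γ := fun m => Real.rpow_nonneg (by positivity) _
  have he1 : (1:ℝ) ≤ Real.exp 1 := Real.one_le_exp zero_le_one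
  have hlognn : ∀ m, 0 ≤ Real.log (Real.exp 1 + 1/eps m) := fun m => Real.log_nonneg (by
    have h1 : 0 < 1/eps m := by positivity
    linarith)
  have hLnn : ∀ m, 0 ≤ L m := fun m => by
    have h1 := hτγ m
    have h2 : (0:ℝ) ≤ (C3/τ m * Real.log (Real.exp 1 + 1/eps m))^σ :=
      Real.rpow_nonneg (mul_nonneg (by positivity) (hlognn m)) _
    simp only [hLdef]
    nlinarith [hC3.le]
  have hSM1 : ∀ m, 1 ≤ SM m := fun m => by
    have h := hLnn m
    show (1:ℝ) ≤ Real.exp (L m / 2)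
    exact Real.one_le_exp (div_nonneg h (by norm_num))
  -- the feedback operators
  have hctrl : ∀ m : ℕ, ∃ F : Lp ℝ 2 (volume.restrict Ω) →L[ℝ] Lp ℝ 2 (volume.restrict Ω),
      ∀ x : Lp ℝ 2 (volume.restrict Ω),
        ‖F x‖^2 ≤ Real.exp (L m) * ‖x‖^2 ∧
        ‖heatCLM B hpos (τ m) (hτpos m).le (heatCLM B hpos (τ m) (hτpos m).le x)
          + heatCLM B hpos (τ m) (hτpos m).le
              (indCLM (Ω := Ω) ω hωm (F x))‖^2 ≤ eps m * ‖x‖^2 := by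
    intro m
    apply exists_control (heatCLM B hpos (τ m) (hτpos m).le) (indCLM (Ω := Ω) ω hωm)
      (fun x y => heat_selfadj B hpos (τ m) (hτpos m).le x y)
      (fun x y => indLp_selfadj ω hωm x y)
      (fun x => heat_norm_le B hpos (τ m) (hτpos m).le x)
      (Real.exp (L m)) (eps m) (Real.exp_pos _) (hepspos m)
    intro u
    have h := hiii (eps m) (hepspos m) (τ m) (hτpos m) u
    rw [← Real.exp_add] at h
    simp only [hLdef]
    exact h
  choose F hF using hctrl
  have hFnorm : ∀ m x, ‖F m x‖ ≤ SM m * ‖x‖ := by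
    intro m x
    apply sq_le_sq_of_nonneg (norm_nonneg _) (by positivity)
    have hsq : (SM m * ‖x‖)^2 = Real.exp (L m) * ‖x‖^2 := by
      rw [mul_pow]
      congr 1
      simp only [hSMdef]
      rw [sq, ← Real.exp_add]
      congr 1; ring
    rw [hsq]
    exact (hF m x).1
  -- geometry of the time points
  have ht0 : t_ 0 = 0 := by simp [ht_def]
  have htlt : ∀ m, t_ m < T := fun m => by
    simp only [ht_def]
    have : 0 < T * (1/2:ℝ)^m := by positivity
    linarith
  have htmono : StrictMono t_ := by
    intro a b hab
    simp only [ht_def]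
    have h := pow_lt_pow_right_of_lt_one₀ (by norm_num : (0:ℝ) < 1/2) (by norm_num) hab
    nlinarith
  have httends : Tendsto t_ atTop (nhds T) := by
    have h := tendsto_pow_atTop_nhds_zero_of_lt_one (by norm_num : (0:ℝ) ≤ 1/2)
      (by norm_num : (1/2:ℝ) < 1)
    have h2 := Filter.Tendsto.sub (tendsto_const_nhds (x := T))
      (Filter.Tendsto.const_mul T h)
    simpa [ht_def] using h2
  have hsub1 : ∀ m, (t_ m + t_ (m+1))/2 - t_ m = τ m := fun m => by
    simp only [ht_def, hτdef]; ring
  have hsub2 : ∀ m, t_ (m+1) - (t_ m + t_ (m+1))/2 = τ m := fun m => by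
    simp only [ht_def, hτdef]; ring
  have hTt : ∀ m, T - t_ (m+1) = T * (1/2:ℝ)^(m+1) := fun m => by
    simp only [ht_def]; ring
  -- the main per-step estimate on L
  have hLle : ∀ m, L m ≤ C3 + (C3*(4/T)^γ + ((4*C3/T)*(A+2))^σ) * β^m := by
    intro m
    have h22 : (2:ℝ)^(m+2) = 4*2^m := by rw [pow_add]; ring
    have hτm : τ m = T/(4*2^m) := by
      simp only [hτdef]
      rw [div_pow, one_pow, h22, mul_one_div]
    have hτinv : 1/τ m = (4/T) * 2^m := by
      rw [hτm, one_div_div]; ring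
    have h2mpos : (0:ℝ) < (2:ℝ)^m := by positivity
    have hp1 : (1/τ m)^γ ≤ (4/T)^γ * β^m := by
      rw [hτinv, Real.mul_rpow (by positivity) (by positivity),
        rpow_natpow 2 (by norm_num) γ m]
      exact mul_le_mul_of_nonneg_left
        (pow_le_pow_left₀ (Real.rpow_nonneg (by norm_num) _) h2γβ m)
        (Real.rpow_nonneg (by positivity) _)
    have hxnn : (0:ℝ) ≤ A * β^m := by positivity
    have hlog : Real.log (Real.exp 1 + 1/eps m) ≤ A*β^m + 2 := by
      have hie : 1/eps m = Real.exp (A*β^m) := by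
        simp only [hepsdef]
        rw [Real.exp_neg, one_div, inv_inv]
      have hle : Real.exp 1 + 1/eps m ≤ Real.exp (A*β^m + 2) := by
        rw [hie]
        have e1 : Real.exp 1 ≤ Real.exp (A*β^m + 1) := Real.exp_le_exp.mpr (by linarith)
        have e2 : Real.exp (A*β^m) ≤ Real.exp (A*β^m + 1) := Real.exp_le_exp.mpr (by linarith)
        have e3 : (2:ℝ) ≤ Real.exp 1 := by linarith [Real.add_one_le_exp 1]
        have e4 : Real.exp (A*β^m + 2) = Real.exp (A*β^m+1) * Real.exp 1 := by
          rw [← Real.exp_add]; ring_nf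
        nlinarith [Real.exp_pos (A*β^m+1)]
      calc Real.log (Real.exp 1 + 1/eps m) ≤ Real.log (Real.exp (A*β^m+2)) :=
            Real.log_le_log (by positivity) hle
        _ = A*β^m + 2 := Real.log_exp _
    have hp2 : (C3/τ m * Real.log (Real.exp 1 + 1/eps m))^σ ≤ ((4*C3/T)*(A+2))^σ * β^m := by
      have hCτ : C3/τ m = (4*C3/T) * 2^m := by
        rw [div_eq_mul_one_div, hτinv]; ring
      have hCτnn : (0:ℝ) ≤ C3/τ m := by positivity
      have hlb : A*β^m + 2 ≤ (A+2)*β^m := by nlinarith [hβm1 m]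
      have hbase : C3/τ m * Real.log (Real.exp 1 + 1/eps m) ≤ ((4*C3/T)*(A+2)) * (2*β)^m := by
        calc C3/τ m * Real.log (Real.exp 1 + 1/eps m) ≤ C3/τ m * (A*β^m + 2) :=
              mul_le_mul_of_nonneg_left hlog hCτnn
          _ ≤ C3/τ m * ((A+2)*β^m) := mul_le_mul_of_nonneg_left hlb hCτnn
          _ = ((4*C3/T)*(A+2)) * (2^m*β^m) := by rw [hCτ]; ring
          _ = ((4*C3/T)*(A+2)) * (2*β)^m := by rw [mul_pow]
      have h2βσ : ((2*β):ℝ)^σ ≤ β := by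
        have h2β0 : (2:ℝ)^(γ+2) = 2 * (2:ℝ)^(γ+1) := by
          have hh := Real.rpow_add two_pos 1 (γ+1)
          rw [Real.rpow_one] at hh
          rw [show γ+2 = 1+(γ+1) by ring, hh]
        have h2β : (2:ℝ)*β = (2:ℝ)^(γ+2) := by
          rw [hβdef, h2β0]
        rw [h2β, ← Real.rpow_mul (by norm_num : (0:ℝ) ≤ 2)]
        have hexpineq : (γ+2)*σ ≤ γ+1 := by nlinarith [hγσ]
        calc (2:ℝ)^((γ+2)*σ) ≤ (2:ℝ)^(γ+1) :=
              Real.rpow_le_rpow_of_exponent_le one_le_two hexpineq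
          _ = β := hβdef.symm
      calc (C3/τ m * Real.log (Real.exp 1 + 1/eps m))^σ
          ≤ (((4*C3/T)*(A+2)) * (2*β)^m)^σ :=
            Real.rpow_le_rpow (mul_nonneg hCτnn (hlognn m)) hbase hσ0.le
        _ = ((4*C3/T)*(A+2))^σ * ((2*β)^m)^σ := by
            rw [Real.mul_rpow (by positivity) (by positivity)]
        _ = ((4*C3/T)*(A+2))^σ * (((2*β):ℝ)^σ)^m := by
            rw [rpow_natpow (2*β) (by positivity) σ m]
        _ ≤ ((4*C3/T)*(A+2))^σ * β^m := by
            apply mul_le_mul_of_nonneg_left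
              (pow_le_pow_left₀ (Real.rpow_nonneg (by positivity) _) h2βσ m)
              (Real.rpow_nonneg (by positivity) _)
    simp only [hLdef]
    nlinarith [hp1, hp2, hC3.le]
  -- key decay inequality
  have hKEY : ∀ m : ℕ, (1 + SM m) * Ex m ≤ C * Real.exp (-(((2:ℝ)^(m+1))^γ)) := by
    intro m
    have hgeom : ∑ k ∈ Finset.range m, β^k = (β^m - 1)/(β-1) := geom_sum_eq hβ1.ne' m
    have hβ1' : (0:ℝ) < β - 1 := by linarith
    have h2exp : ((2:ℝ)^(m+1))^γ ≤ (2:ℝ)^(γ+1) * β^m := by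
      rw [rpow_natpow 2 (by norm_num) γ (m+1)]
      calc ((2:ℝ)^γ)^(m+1) = ((2:ℝ)^γ)^m * (2:ℝ)^γ := pow_succ _ m
        _ ≤ β^m * (2:ℝ)^(γ+1) := by
            apply mul_le_mul (pow_le_pow_left₀ (Real.rpow_nonneg (by norm_num) _) h2γβ m)
              (Real.rpow_le_rpow_of_exponent_le one_le_two (by linarith))
              (Real.rpow_nonneg (by norm_num) _) (pow_nonneg hβpos.le m)
        _ = (2:ℝ)^(γ+1) * β^m := mul_comm _ _
    have h3 : (2:ℝ)^(γ+2) = 2 * (2:ℝ)^(γ+1) := by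
      have hh := Real.rpow_add two_pos 1 (γ+1)
      rw [Real.rpow_one] at hh
      rw [show γ+2 = 1+(γ+1) by ring, hh]
    have hid : (A/2) * ((β^m - 1)/(β-1)) + A/(2*(β-1)) = (A/(β-1)) * β^m / 2 := by
      field_simp
      ring
    have hcoef : C3*(4/T)^γ + ((4*C3/T)*(A+2))^σ + 2*(2:ℝ)^(γ+1) ≤ A/(β-1) := by
      rw [← h3]; exact hA
    have hmul := mul_le_mul_of_nonneg_right hcoef (by positivity : (0:ℝ) ≤ β^m/2)
    have hlogineq : L m / 2 + ((2:ℝ)^(m+1))^γ ≤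
        (A/2) * ((β^m - 1)/(β-1)) + (A/(2*(β-1)) + C3/2) := by
      have h1 := hLle m
      nlinarith [h2exp, hmul, hid]
    calc (1 + SM m) * Ex m ≤ (2 * SM m) * Ex m := by
          nlinarith [hSM1 m, hExpos m]
      _ = 2 * Real.exp (L m / 2 + (-(A/2) * ∑ k ∈ Finset.range m, β^k)) := by
          simp only [hSMdef, hExdef]
          rw [mul_assoc, ← Real.exp_add]
      _ ≤ 2 * Real.exp ((A/(2*(β-1)) + C3/2) - ((2:ℝ)^(m+1))^γ) := by
          apply mul_le_mul_of_nonneg_left (Real.exp_le_exp.mpr ?_) (by norm_num)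
          rw [hgeom]
          linarith [hlogineq]
      _ = C * Real.exp (-(((2:ℝ)^(m+1))^γ)) := by
          rw [show (A/(2*(β-1)) + C3/2) - ((2:ℝ)^(m+1))^γ
              = (A/(2*(β-1)) + C3/2) + (-(((2:ℝ)^(m+1))^γ)) by ring,
            Real.exp_add, hCdef]
          ring
  refine ⟨t_, F, C, 1, hC, one_pos, htmono, ht0, httends, htlt, ?_⟩
  intro z0 z hz0 hfree himp hcont
  -- decay along the sequence
  have hz_m : ∀ m, ‖z (t_ m)‖ ≤ Ex m * ‖z0‖ := by
    intro m
    induction m with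
    | zero =>
      rw [ht0, hz0]
      simp [hExdef]
    | succ n ih =>
      have hupd := hcont n
      rw [hsub1 n, hsub2 n] at hupd
      have heq : z (t_ (n+1)) = heatCLM B hpos (τ n) (hτpos n).le
          (heatCLM B hpos (τ n) (hτpos n).le (z (t_ n))
            + indCLM (Ω := Ω) ω hωm (F n (z (t_ n)))) := by
        rw [hupd]; rfl
      have heq2 : z (t_ (n+1)) = heatCLM B hpos (τ n) (hτpos n).le
            (heatCLM B hpos (τ n) (hτpos n).le (z (t_ n)))
          + heatCLM B hpos (τ n) (hτpos n).le
            (indCLM (Ω := Ω) ω hωm (F n (z (t_ n)))) := by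
        rw [heq, _root_.map_add]
      have hnorm2 : ‖z (t_ (n+1))‖^2 ≤ eps n * ‖z (t_ n)‖^2 := by
        rw [heq2]; exact (hF n (z (t_ n))).2
      have hstep : ‖z (t_ (n+1))‖ ≤ Real.exp (-(A/2) * β^n) * ‖z (t_ n)‖ := by
        apply sq_le_sq_of_nonneg (norm_nonneg _) (by positivity)
        have hsq : (Real.exp (-(A/2) * β^n) * ‖z (t_ n)‖)^2 = eps n * ‖z (t_ n)‖^2 := by
          rw [mul_pow]
          congr 1
          simp only [hepsdef]
          rw [sq, ← Real.exp_add]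
          congr 1; ring
        rw [hsq]; exact hnorm2
      have hEx : Ex (n+1) = Real.exp (-(A/2) * β^n) * Ex n := by
        simp only [hExdef]
        rw [Finset.sum_range_succ, ← Real.exp_add]
        congr 1; ring
      calc ‖z (t_ (n+1))‖ ≤ Real.exp (-(A/2)*β^n) * ‖z (t_ n)‖ := hstep
        _ ≤ Real.exp (-(A/2)*β^n) * (Ex n * ‖z0‖) :=
            mul_le_mul_of_nonneg_left ih (Real.exp_pos _).le
        _ = Ex (n+1) * ‖z0‖ := by rw [hEx]; ring
  -- estimate inside each interval
  have hIval : ∀ m, ∀ t ∈ Ico (t_ m) (t_ (m+1)), ‖z t‖ ≤ (1 + SM m) * ‖z (t_ m)‖ := by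
    intro m t ht
    rcases lt_or_ge t ((t_ m + t_ (m+1))/2) with hts | hts
    · have h := hfree m t ⟨ht.1, hts⟩
      rw [h]
      have hle := heat_norm_le B hpos (t - t_ m) (by linarith [ht.1]) (z (t_ m))
      nlinarith [norm_nonneg (z (t_ m)), hSM1 m]
    · have h := himp m t ⟨hts, ht.2⟩
      rw [hsub1 m] at h
      rw [h]
      have h0 : (0:ℝ) ≤ t - (t_ m + t_ (m+1))/2 := by linarith
      have hle := heat_norm_le B hpos (t - (t_ m + t_ (m+1))/2) h0
        (heatSG B lam (τ m) (z (t_ m)) + indLp ω hωm (F m (z (t_ m))))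
      have h2 := norm_add_le (heatSG B lam (τ m) (z (t_ m))) (indLp ω hωm (F m (z (t_ m))))
      have h3 := heat_norm_le B hpos (τ m) (hτpos m).le (z (t_ m))
      have h4 := indLp_norm_le ω hωm (F m (z (t_ m)))
      have h5 := hFnorm m (z (t_ m))
      have h6 : (1 + SM m) * ‖z (t_ m)‖ = ‖z (t_ m)‖ + SM m * ‖z (t_ m)‖ := by ring
      linarith
  -- main pointwise bound
  have hmain : ∀ t ∈ Ico (0:ℝ) T,
      ‖z t‖ ≤ C * Real.exp (-(1/(1:ℝ)) * (T / (T - t))^γ) * ‖z0‖ := by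
    intro t ht
    have hex : ∃ m, t < t_ (m+1) := by
      obtain ⟨m, hm⟩ := (Filter.Tendsto.eventually_const_lt ht.2 httends).exists
      exact ⟨m, lt_of_lt_of_le hm (htmono.monotone (Nat.le_succ m))⟩
    have hm1 : t < t_ (Nat.find hex + 1) := Nat.find_spec hex
    set m := Nat.find hex with hmdef
    have hm0 : t_ m ≤ t := by
      rcases Nat.eq_zero_or_pos m with h0 | h0
      · rw [h0, ht0]; exact ht.1
      · obtain ⟨n, hn⟩ : ∃ n, m = n+1 := ⟨m-1, (Nat.succ_pred_eq_of_pos h0).symm⟩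
        have hmin := Nat.find_min hex (show m - 1 < m from Nat.sub_lt h0 one_pos)
        push_neg at hmin
        have : m - 1 + 1 = m := Nat.succ_pred_eq_of_pos h0
        rw [this] at hmin
        exact hmin
    have hbound := hIval m t ⟨hm0, hm1⟩
    have hTtpos : 0 < T - t := by linarith [ht.2]
    have hfrac : T/(T - t) ≤ (2:ℝ)^(m+1) := by
      have h1 := hTt m
      have h2 : T * (1/2:ℝ)^(m+1) ≤ T - t := by
        rw [← h1]
        have := hm1
        linarith
      have h3 : 0 < T * (1/2:ℝ)^(m+1) := by positivity
      have h4 := div_le_div_of_nonneg_left hT.le h3 h2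
      calc T/(T-t) ≤ T/(T*(1/2:ℝ)^(m+1)) := h4
        _ = (2:ℝ)^(m+1) := by
            rw [div_pow, one_pow]
            field_simp
    have hrp : (T/(T-t))^γ ≤ ((2:ℝ)^(m+1))^γ :=
      Real.rpow_le_rpow (by positivity) hfrac hγ.le
    have hKm := hKEY m
    calc ‖z t‖ ≤ (1 + SM m) * ‖z (t_ m)‖ := hbound
      _ ≤ (1 + SM m) * (Ex m * ‖z0‖) := by
          apply mul_le_mul_of_nonneg_left (hz_m m)
          linarith [hSM1 m]
      _ = ((1 + SM m) * Ex m) * ‖z0‖ := by ring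
      _ ≤ (C * Real.exp (-(((2:ℝ)^(m+1))^γ))) * ‖z0‖ :=
          mul_le_mul_of_nonneg_right hKm (norm_nonneg _)
      _ ≤ C * Real.exp (-(1/(1:ℝ)) * (T / (T - t))^γ) * ‖z0‖ := by
          apply mul_le_mul_of_nonneg_right _ (norm_nonneg _)
          apply mul_le_mul_of_nonneg_left _ hC.le
          apply Real.exp_le_exp.mpr
          have : -(1/(1:ℝ)) * (T / (T - t))^γ = -((T / (T - t))^γ) := by norm_num
          rw [this]
          linarith [hrp]
  refine ⟨hmain, ?_, ?_⟩
  · -- tendsto at T from the left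
    have hbound : ∀ᶠ t in nhdsWithin T (Iio T),
        ‖z t‖ ≤ C * Real.exp (-(1/(1:ℝ)) * (T/(T-t))^γ) * ‖z0‖ := by
      have h1 : ∀ᶠ t in nhdsWithin T (Iio T), 0 < t :=
        (eventually_gt_nhds hT).filter_mono nhdsWithin_le_nhds
      filter_upwards [h1, eventually_mem_nhdsWithin] with t h1t h2t
      exact hmain t ⟨h1t.le, h2t⟩
    have hsubT : Tendsto (fun t : ℝ => T - t) (nhdsWithin T (Iio T)) (nhdsWithin 0 (Ioi 0)) := by
      rw [tendsto_nhdsWithin_iff]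
      constructor
      · have h := Filter.Tendsto.sub (tendsto_const_nhds (x := T))
          (tendsto_id (x := nhds T))
        have h2 := h.mono_left (nhdsWithin_le_nhds (s := Iio T))
        simpa using h2
      · filter_upwards [eventually_mem_nhdsWithin] with t htt
        exact sub_pos.mpr (mem_Iio.mp htt)
    have hinv : Tendsto (fun t : ℝ => (T - t)⁻¹) (nhdsWithin T (Iio T)) atTop :=
      tendsto_inv_nhdsGT_zero.comp hsubT
    have hdiv : Tendsto (fun t : ℝ => T / (T - t)) (nhdsWithin T (Iio T)) atTop := by
      have := hinv.const_mul_atTop hT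
      simpa [div_eq_mul_inv] using this
    have hrp : Tendsto (fun t : ℝ => (T/(T-t))^γ) (nhdsWithin T (Iio T)) atTop :=
      (tendsto_rpow_atTop hγ).comp hdiv
    have hexp0 : Tendsto (fun x : ℝ => C * Real.exp (-(1/(1:ℝ)) * x) * ‖z0‖) atTop (nhds 0) := by
      have hfe : (fun x : ℝ => C * Real.exp (-(1/(1:ℝ)) * x) * ‖z0‖)
          = fun x : ℝ => C * Real.exp (-x) * ‖z0‖ := by
        funext x; norm_num
      rw [hfe]
      have h := (Real.tendsto_exp_neg_atTop_nhds_zero.const_mul C).mul_const ‖z0‖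
      simpa using h
    exact squeeze_zero' (Eventually.of_forall fun t => norm_nonneg _) hbound (hexp0.comp hrp)
  · -- tendsto of the feedback terms
    have hFb : ∀ m, ‖F m (z (t_ m))‖ ≤ C * Real.exp (-(((2:ℝ)^(m+1))^γ)) * ‖z0‖ := by
      intro m
      calc ‖F m (z (t_ m))‖ ≤ SM m * ‖z (t_ m)‖ := hFnorm m _
        _ ≤ SM m * (Ex m * ‖z0‖) := mul_le_mul_of_nonneg_left (hz_m m) (hSMpos m).le
        _ ≤ ((1 + SM m) * Ex m) * ‖z0‖ := by
            nlinarith [hExpos m, norm_nonneg z0, hSMpos m,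
              mul_nonneg (hExpos m).le (norm_nonneg z0)]
        _ ≤ C * Real.exp (-(((2:ℝ)^(m+1))^γ)) * ‖z0‖ :=
            mul_le_mul_of_nonneg_right (hKEY m) (norm_nonneg _)
    apply squeeze_zero (fun m => norm_nonneg _) hFb
    have h1 : Tendsto (fun m : ℕ => ((2:ℝ)^(m+1))) atTop atTop :=
      (tendsto_pow_atTop_atTop_of_one_lt one_lt_two).comp (tendsto_add_atTop_nat 1)
    have h2 : Tendsto (fun m : ℕ => ((2:ℝ)^(m+1))^γ) atTop atTop :=
      (tendsto_rpow_atTop hγ).comp h1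
    have h3 := Real.tendsto_exp_neg_atTop_nhds_zero.comp h2
    have h4 := (h3.const_mul C).mul_const ‖z0‖
    simpa [Function.comp] using h4
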